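/- Let p ≥ 2 and let c(p) ∈ (0,1] be the constant from the vector inequality |b|^p ≥ |a|^p + p⟨|a|^{p−2}a, b−a⟩ + c(p)|b−a|^p. Let u* : Ω̄ → ℝ be a C² function with div(|∇u*|^{p−2}∇u*) = 0 in Ω, and let v : Ω̄ → ℝ be a C¹ function with v = u* on ∂Ω. Then c(p)·∫_Ω |∇v(x) − ∇u*(x)|^p dx ≤ ∫_Ω ( |∇v(x)|^p − |∇u*(x)|^p ) dx. -/

import Mathlib

open MeasureTheory Real Set Filter Metric Bornology
open scoped Topology RealInnerProductSpace ENNReal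

noncomputable section
set_option maxHeartbeats 1600000

/-- Divergence (in the spatial variables) of a vector field on Euclidean space. -/
def vdiv {n : ℕ} (V : EuclideanSpace ℝ (Fin n) → EuclideanSpace ℝ (Fin n))
    (x : EuclideanSpace ℝ (Fin n)) : ℝ :=
  ∑ i, fderiv ℝ V x (EuclideanSpace.single i 1) i

/-- The `p`-Laplacian `Δ_p f = div (|∇f|^{p-2} ∇f)`. -/
def pLap {n : ℕ} (p : ℝ) (f : EuclideanSpace ℝ (Fin n) → ℝ)
    (x : EuclideanSpace ℝ (Fin n)) : ℝ :=
  vdiv (fun y => ‖gradient f y‖ ^ (p - 2) • gradient f y) x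

/-- First time derivative `u_t`. -/
def ut {n : ℕ} (u : ℝ → EuclideanSpace ℝ (Fin n) → ℝ) (t : ℝ)
    (x : EuclideanSpace ℝ (Fin n)) : ℝ :=
  deriv (fun s => u s x) t

/-- Second time derivative `u_tt`. -/
def utt {n : ℕ} (u : ℝ → EuclideanSpace ℝ (Fin n) → ℝ) (t : ℝ)
    (x : EuclideanSpace ℝ (Fin n)) : ℝ :=
  deriv (fun s => ut u s x) t

/-- A classical solution of the damped `p`-Laplace equation
`u_tt + a u_t = Δ_p u` on `[0,∞) × Ω̄` with initial data `u₀`, zero initial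
velocity and boundary data `g`. -/
structure IsDampedSolution {n : ℕ} (p a : ℝ) (Ω : Set (EuclideanSpace ℝ (Fin n)))
    (g u₀ : EuclideanSpace ℝ (Fin n) → ℝ)
    (u : ℝ → EuclideanSpace ℝ (Fin n) → ℝ) : Prop where
  smooth : ContDiffOn ℝ 2 (fun q : ℝ × EuclideanSpace ℝ (Fin n) => u q.1 q.2)
      (Ici (0 : ℝ) ×ˢ closure Ω)
  pde : ∀ t > (0 : ℝ), ∀ x ∈ Ω, utt u t x + a * ut u t x = pLap p (u t) x
  init : ∀ x ∈ Ω, u 0 x = u₀ x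
  init_vel : ∀ x ∈ Ω, ut u 0 x = 0
  bdry : ∀ t ≥ (0 : ℝ), ∀ x ∈ frontier Ω, u t x = g x

/-- The stationary solution: a `p`-harmonic function with boundary data `g`. -/
structure IsStationarySolution {n : ℕ} (p : ℝ) (Ω : Set (EuclideanSpace ℝ (Fin n)))
    (g ustar : EuclideanSpace ℝ (Fin n) → ℝ) : Prop where
  smooth : ContDiffOn ℝ 2 ustar (closure Ω)
  pharmonic : ∀ x ∈ Ω, pLap p ustar x = 0
  bdry : ∀ x ∈ frontier Ω, ustar x = g x


section AuxBasic
variable {n : ℕ}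

local notation "𝔼" => EuclideanSpace ℝ (Fin n)

/-- coordinate bound -/
lemma euclid_abs_coord_le (x : 𝔼) (i : Fin n) : |x i| ≤ ‖x‖ := by
  rw [EuclideanSpace.norm_eq]
  rw [← Real.sqrt_sq_eq_abs]
  apply Real.sqrt_le_sqrt
  simp only [Real.norm_eq_abs, sq_abs]
  exact Finset.single_le_sum (f := fun j => x j ^ 2) (fun j _ => sq_nonneg _) (Finset.mem_univ i)

/-- decomposition of a linear functional applied to a vector via coordinates -/
lemma euclid_sum_apply (ℓ : 𝔼 →L[ℝ] ℝ) (z : 𝔼) :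
    ∑ i, ℓ (EuclideanSpace.single i 1) * z i = ℓ z := by
  have hz : z = ∑ i, z i • EuclideanSpace.single i (1:ℝ) := by
    apply PiLp.ext
    intro j
    rw [show ((∑ i, z i • EuclideanSpace.single i (1:ℝ)) j) = ∑ i, (z i • EuclideanSpace.single i (1:ℝ)) j from by rw [WithLp.ofLp_sum, Finset.sum_apply]]
    simp [EuclideanSpace.single_apply]
  conv_rhs => rw [hz]
  rw [map_sum]
  congr 1
  ext i
  rw [ContinuousLinearMap.map_smul]
  simp [mul_comm]

lemma gradient_inner_apply {f : 𝔼 → ℝ} {x y : 𝔼} : ⟪gradient f x, y⟫ = fderiv ℝ f x y := by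
  unfold gradient
  exact InnerProductSpace.toDual_symm_apply

lemma norm_gradient_eq {f : 𝔼 → ℝ} {x : 𝔼} : ‖gradient f x‖ = ‖fderiv ℝ f x‖ := by
  unfold gradient
  exact LinearIsometryEquiv.norm_map _ _

lemma gradient_sub_eq {f g : 𝔼 → ℝ} {x : 𝔼} (hf : DifferentiableAt ℝ f x)
    (hg : DifferentiableAt ℝ g x) :
    gradient (fun y => f y - g y) x = gradient f x - gradient g x := by
  unfold gradient
  rw [show fderiv ℝ (fun y => f y - g y) x = fderiv ℝ f x - fderiv ℝ g x from fderiv_sub hf hg,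
    map_sub]

end AuxBasic

section AuxBound
variable {n : ℕ} {Ω : Set (EuclideanSpace ℝ (Fin n))}

lemma aux_continuousOn_fderiv {f : EuclideanSpace ℝ (Fin n) → ℝ} (hΩo : IsOpen Ω)
    (hf : ContDiffOn ℝ 1 f (closure Ω)) : ContinuousOn (fderiv ℝ f) Ω := by
  have h1 : ContDiffOn ℝ 1 f Ω := hf.mono subset_closure
  exact (h1.continuousOn_fderivWithin hΩo.uniqueDiffOn le_rfl).congr
    fun x hx => (fderivWithin_of_isOpen hΩo hx).symm

lemma aux_differentiableAt {f : EuclideanSpace ℝ (Fin n) → ℝ} (hΩo : IsOpen Ω)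
    (hf : ContDiffOn ℝ 1 f (closure Ω)) {x : EuclideanSpace ℝ (Fin n)} (hx : x ∈ Ω) :
    DifferentiableAt ℝ f x :=
  ((hf.mono subset_closure).differentiableOn (by simp)).differentiableAt (hΩo.mem_nhds hx)

lemma aux_exists_fderiv_bound (hΩo : IsOpen Ω) {f : EuclideanSpace ℝ (Fin n) → ℝ}
    (hΩb : Bornology.IsBounded Ω) (hf : ContDiffOn ℝ 1 f (closure Ω)) :
    ∃ M : ℝ, 0 ≤ M ∧ ∀ x ∈ Ω, ‖fderiv ℝ f x‖ ≤ M := by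
  have hK : IsCompact (closure Ω) :=
    Metric.isCompact_of_isClosed_isBounded isClosed_closure hΩb.closure
  have key : ∀ a : closure Ω, ∃ O : Set (EuclideanSpace ℝ (Fin n)),
      IsOpen O ∧ (a : EuclideanSpace ℝ (Fin n)) ∈ O ∧ ∃ C : ℝ, ∀ y ∈ Ω ∩ O, ‖fderiv ℝ f y‖ ≤ C := by
    rintro ⟨a, ha⟩
    have h1 : ContDiffWithinAt ℝ 1 f (closure Ω) a := hf a ha
    obtain ⟨u, hu, pt, hpt⟩ := h1 1 le_rfl
    rw [insert_eq_of_mem ha] at hu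
    obtain ⟨O₁, hO₁o, haO₁, hO₁sub⟩ := mem_nhdsWithin.1 hu
    have hau : a ∈ u := hO₁sub ⟨haO₁, ha⟩
    -- continuity of the derivative of the Taylor series at a
    have hcont : ContinuousWithinAt (fun y => ‖pt y 1‖) u a :=
      ((hpt.cont 1 le_rfl) a hau).norm
    have hev : ∀ᶠ y in 𝓝[u] a, ‖pt y 1‖ < ‖pt a 1‖ + 1 :=
      hcont (Iio_mem_nhds (by linarith))
    obtain ⟨O₂, hO₂o, haO₂, hO₂sub⟩ := mem_nhdsWithin.1 hev
    refine ⟨O₁ ∩ O₂, hO₁o.inter hO₂o, ⟨haO₁, haO₂⟩, ‖pt a 1‖ + 1, ?_⟩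
    rintro y ⟨hyΩ, hyO₁, hyO₂⟩
    have hyu : y ∈ u := hO₁sub ⟨hyO₁, subset_closure hyΩ⟩
    have hder : HasFDerivAt f ((continuousMultilinearCurryFin1 ℝ (EuclideanSpace ℝ (Fin n)) ℝ) (pt y 1)) y := by
      refine (hpt.hasFDerivWithinAt (by simp) hyu).hasFDerivAt ?_
      refine mem_nhds_iff.2 ⟨Ω ∩ O₁, fun z hz => hO₁sub ⟨hz.2, subset_closure hz.1⟩,
        hΩo.inter hO₁o, ⟨hyΩ, hyO₁⟩⟩
    rw [hder.fderiv]
    calc ‖(continuousMultilinearCurryFin1 ℝ (EuclideanSpace ℝ (Fin n)) ℝ) (pt y 1)‖ = ‖pt y 1‖ :=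
          (continuousMultilinearCurryFin1 ℝ (EuclideanSpace ℝ (Fin n)) ℝ).norm_map _
      _ ≤ ‖pt a 1‖ + 1 := (hO₂sub ⟨hyO₂, hyu⟩).le
  choose O hOopen haO C hC using key
  rcases hK.elim_finite_subcover O hOopen
      (fun x hx => mem_iUnion.2 ⟨⟨x, hx⟩, haO _⟩) with ⟨T, hT⟩
  refine ⟨∑ a ∈ T, max (C a) 0, Finset.sum_nonneg fun a _ => le_max_right _ _, ?_⟩
  intro x hx
  rcases mem_iUnion₂.1 (hT (subset_closure hx)) with ⟨a, haT, hxa⟩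
  calc ‖fderiv ℝ f x‖ ≤ C a := hC a x ⟨hx, hxa⟩
    _ ≤ max (C a) 0 := le_max_left _ _
    _ ≤ ∑ a ∈ T, max (C a) 0 :=
        Finset.single_le_sum (fun b _ => le_max_right (C b) 0) haT

end AuxBound

section AuxDensity
variable {n : ℕ} {Ω : Set (EuclideanSpace ℝ (Fin n))}

lemma aux_fderiv_ae_zero (hΩo : IsOpen Ω)
    {w : EuclideanSpace ℝ (Fin n) → ℝ} (hw : ∀ x ∈ Ω, DifferentiableAt ℝ w x)
    (hwc : ContinuousOn w Ω) :
    ∀ᵐ x ∂(volume.restrict Ω), w x = 0 → fderiv ℝ w x = 0 := by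
  set A : Set (EuclideanSpace ℝ (Fin n)) := Ω ∩ w ⁻¹' {0} with hA
  have hU : IsOpen (Ω ∩ w ⁻¹' ({0}ᶜ)) := hwc.isOpen_inter_preimage hΩo isOpen_compl_singleton
  have hAmeas : MeasurableSet A := by
    have h : A = Ω \ (Ω ∩ w ⁻¹' ({0}ᶜ)) := by
      ext y; simp only [hA, mem_inter_iff, mem_preimage, mem_singleton_iff, mem_diff,
        mem_compl_iff]; tauto
    rw [h]; exact hΩo.measurableSet.diff hU.measurableSet
  have hbes := Besicovitch.ae_tendsto_measure_inter_div_of_measurableSet volume hAmeas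
  rw [ae_restrict_iff' hΩo.measurableSet]
  filter_upwards [hbes] with x hx hxΩ hwx
  by_contra hL
  set L := fderiv ℝ w x with hLdef
  have hxA : x ∈ A := ⟨hxΩ, by simpa using hwx⟩
  rw [Set.indicator_of_mem hxA] at hx
  simp only [Pi.one_apply] at hx
  have hxdiff : HasFDerivAt w L x := (hw x hxΩ).hasFDerivAt
  have hLpos : 0 < ‖L‖ := by simpa [norm_pos_iff] using hL
  set z := (InnerProductSpace.toDual ℝ (EuclideanSpace ℝ (Fin n))).symm L with hzdef
  have hzL : ∀ y, ⟪z, y⟫ = L y := fun y => InnerProductSpace.toDual_symm_apply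
  have hznorm : ‖z‖ = ‖L‖ := LinearIsometryEquiv.norm_map _ _
  have hzpos : 0 < ‖z‖ := by rw [hznorm]; exact hLpos
  set u : EuclideanSpace ℝ (Fin n) := ‖z‖⁻¹ • z with hu
  have hunorm : ‖u‖ = 1 := by
    rw [hu, norm_smul, norm_inv, norm_norm, inv_mul_cancel₀ hzpos.ne']
  have hLu : L u = ‖L‖ := by
    rw [← hzL, hu, real_inner_smul_right, real_inner_self_eq_norm_sq, hznorm]
    field_simp
  have h8 : (0:ℝ) < ‖L‖/8 := by positivity
  have hev := (Asymptotics.isLittleO_iff.1 hxdiff.isLittleO) h8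
  obtain ⟨r0, hr0pos, hball⟩ := Metric.eventually_nhds_iff_ball.1 hev
  set d := Module.finrank ℝ (EuclideanSpace ℝ (Fin n)) with hd
  set κ : ℝ≥0∞ := ENNReal.ofReal ((1/4:ℝ)^d) with hκ
  have hκpos : 0 < κ := ENNReal.ofReal_pos.2 (by positivity)
  have hball01ne : volume (ball (0:EuclideanSpace ℝ (Fin n)) 1) ≠ 0 :=
    (measure_ball_pos volume 0 one_pos).ne'
  have hball01top : volume (ball (0:EuclideanSpace ℝ (Fin n)) 1) ≠ ⊤ :=
    measure_ball_lt_top.ne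
  have hbound : ∀ r ∈ Ioo (0:ℝ) r0,
      volume (A ∩ closedBall x r) / volume (closedBall x r) + κ ≤ 1 := by
    rintro r ⟨hrpos, hrlt⟩
    set B' := closedBall (x + (r/2) • u) (r/4) with hB'
    have hB'sub : B' ⊆ closedBall x r := by
      apply closedBall_subset_closedBall'
      rw [dist_eq_norm, add_sub_cancel_left, norm_smul, hunorm]
      simp only [mul_one, Real.norm_eq_abs, abs_of_pos (by positivity : (0:ℝ) < r/2)]
      linarith
    have hdisj : Disjoint (A ∩ closedBall x r) B' := by
      rw [Set.disjoint_left]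
      rintro y ⟨⟨hyΩ', hwy⟩, hyball⟩ hyB'
      have hwy0 : w y = 0 := by simpa using hwy
      have h1 : ‖w y - w x - L (y - x)‖ ≤ ‖L‖/8 * ‖y - x‖ := by
        apply hball
        exact lt_of_le_of_lt (mem_closedBall.1 hyball) hrlt
      rw [hwy0, hwx, sub_zero, zero_sub, norm_neg] at h1
      have h2 : ‖L (y - x)‖ ≤ ‖L‖/8 * r := by
        refine h1.trans ?_
        have hle : ‖y - x‖ ≤ r := by rw [← dist_eq_norm]; exact mem_closedBall.1 hyball
        exact mul_le_mul_of_nonneg_left hle (by positivity)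
      have hy4 : ‖y - (x + (r/2) • u)‖ ≤ r/4 := by
        rw [← dist_eq_norm]; exact mem_closedBall.1 hyB'
      have h3 : L (y - x) = (r/2) * ‖L‖ + L (y - (x + (r/2) • u)) := by
        have hsplit : y - x = (r/2) • u + (y - (x + (r/2) • u)) := by
          abel
        rw [hsplit, map_add, L.map_smul, hLu, smul_eq_mul]
      have h4 : ‖L (y - (x + (r/2) • u))‖ ≤ ‖L‖ * (r/4) :=
        (L.le_opNorm _).trans (mul_le_mul_of_nonneg_left hy4 (norm_nonneg L))
      have h2' := abs_le.1 ((Real.norm_eq_abs _) ▸ h2)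
      have h4' := abs_le.1 ((Real.norm_eq_abs _) ▸ h4)
      have hlow : (r/2) * ‖L‖ - ‖L‖ * (r/4) ≤ L (y - x) := by
        rw [h3]; linarith [h4'.1]
      have hup : L (y - x) ≤ ‖L‖/8 * r := h2'.2
      nlinarith [mul_pos hrpos hLpos]
    have hsum : volume (A ∩ closedBall x r) + volume B' ≤ volume (closedBall x r) := by
      rw [← measure_union hdisj measurableSet_closedBall]
      exact measure_mono (union_subset inter_subset_right hB'sub)
    have hcBne : volume (closedBall x r) ≠ 0 := (measure_closedBall_pos volume x hrpos).ne'
    have hcBtop : volume (closedBall x r) ≠ ⊤ := measure_closedBall_lt_top.ne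
    have hratio : volume B' / volume (closedBall x r) = κ := by
      rw [hB', Measure.addHaar_closedBall volume _ (by positivity : (0:ℝ) ≤ r/4),
          Measure.addHaar_closedBall volume x hrpos.le,
          ENNReal.mul_div_mul_right _ _ hball01ne hball01top,
          ← ENNReal.ofReal_div_of_pos (by positivity : (0:ℝ) < r ^ d)]
      congr 1
      rw [div_pow, div_pow, one_pow, div_div, mul_comm (4^d) (r^d), ← div_div,
        div_self (pow_ne_zero _ hrpos.ne')]
    calc volume (A ∩ closedBall x r) / volume (closedBall x r) + κ
        = (volume (A ∩ closedBall x r) + volume B') / volume (closedBall x r) := by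
          rw [← hratio, ENNReal.div_add_div_same]
      _ ≤ volume (closedBall x r) / volume (closedBall x r) :=
          ENNReal.div_le_div_right hsum _
      _ ≤ 1 := by rw [ENNReal.div_self hcBne hcBtop]
  have htend : Tendsto
      (fun r => volume (A ∩ closedBall x r) / volume (closedBall x r) + κ)
      (𝓝[>] 0) (𝓝 (1 + κ)) := hx.add tendsto_const_nhds
  have hle : 1 + κ ≤ 1 := by
    refine le_of_tendsto htend ?_
    filter_upwards [Ioo_mem_nhdsGT_of_mem (Set.mem_Ico.2 ⟨le_refl (0:ℝ), hr0pos⟩)] with r hr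
    exact hbound r hr
  have : κ ≤ 0 := by
    have h1 : (1:ℝ≥0∞) + κ ≤ 1 + 0 := by simpa using hle
    exact (ENNReal.add_le_add_iff_left ENNReal.one_ne_top).1 h1
  exact absurd (le_antisymm this zero_le) hκpos.ne'

end AuxDensity

lemma aux_div_integral_zero {m : ℕ}
    (G : EuclideanSpace ℝ (Fin (m+1)) → EuclideanSpace ℝ (Fin (m+1)))
    (G' : EuclideanSpace ℝ (Fin (m+1)) → (EuclideanSpace ℝ (Fin (m+1)) →L[ℝ] EuclideanSpace ℝ (Fin (m+1))))
    (R : ℝ) (hG : ∀ x, HasFDerivAt G (G' x) x)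
    (hG0 : ∀ x, R < ‖x‖ → G x = 0) (hG'0 : ∀ x, R < ‖x‖ → G' x = 0)
    (hi : Integrable (fun x => ∑ i, G' x (EuclideanSpace.single i 1) i)) :
    ∫ x, ∑ i, G' x (EuclideanSpace.single i 1) i = 0 := by
  classical
  set L : EuclideanSpace ℝ (Fin (m+1)) ≃L[ℝ] (Fin (m+1) → ℝ) := EuclideanSpace.equiv (Fin (m+1)) ℝ
  set e := (MeasurableEquiv.toLp 2 (Fin (m+1) → ℝ)).symm
  set a : Fin (m+1) → ℝ := fun _ => -(|R|+1)
  set b : Fin (m+1) → ℝ := fun _ => |R|+1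
  have hle : a ≤ b := fun i => by
    show -(|R|+1) ≤ |R|+1
    linarith [abs_nonneg R]
  -- the components and their derivatives in pi coordinates
  set f : Fin (m+1) → (Fin (m+1) → ℝ) → ℝ := fun i y => G (L.symm y) i
  set P : Fin (m+1) → (EuclideanSpace ℝ (Fin (m+1)) →L[ℝ] ℝ) := fun i =>
    (ContinuousLinearMap.proj i : ((Fin (m+1) → ℝ) →L[ℝ] ℝ)).comp L.toContinuousLinearMap
  set f' : Fin (m+1) → (Fin (m+1) → ℝ) → (Fin (m+1) → ℝ) →L[ℝ] ℝ := fun i y =>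
    (P i).comp ((G' (L.symm y)).comp L.symm.toContinuousLinearMap)
  have hsymm_single : ∀ i : Fin (m+1),
      (L.symm (Pi.single i 1) : EuclideanSpace ℝ (Fin (m+1))) = EuclideanSpace.single i 1 := by
    intro i; rfl
  have hGcont : Continuous G := by
    rw [continuous_iff_continuousAt]; exact fun x => (hG x).continuousAt
  have key := integral_divergence_of_hasFDerivAt_off_countable' a b hle f f'
    ∅ countable_empty
    (fun i => by
      apply Continuous.continuousOn
      exact ((EuclideanSpace.proj i : EuclideanSpace ℝ (Fin (m+1)) →L[ℝ] ℝ).continuous.comp (hGcont.comp L.symm.continuous)))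
    (fun x _ i => by
      have h1 : HasFDerivAt (fun y : Fin (m+1) → ℝ => G (L.symm y))
          ((G' (L.symm x)).comp L.symm.toContinuousLinearMap) x := by
        exact
          (hG (L.symm x)).comp x L.symm.toContinuousLinearMap.hasFDerivAt
      exact (P i).hasFDerivAt.comp x h1)
    (by
      -- integrability
      apply Integrable.integrableOn
      have h2 : Integrable ((fun x => ∑ i, G' x (EuclideanSpace.single i 1) i) ∘
          (⇑((MeasurableEquiv.toLp 2 (Fin (m+1) → ℝ)).symm).symm)) volume :=
        ((MeasurePreserving.symm _
            (EuclideanSpace.volume_preserving_symm_measurableEquiv_toLp (Fin (m+1)))).integrable_comp_emb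
          ((MeasurableEquiv.toLp 2 (Fin (m+1) → ℝ)).symm).symm.measurableEmbedding).2 hi
      refine h2.congr ?_
      filter_upwards with y
      rfl)
  -- the faces vanish
  have hnorm_ge : ∀ (z : Fin (m+1) → ℝ) (i : Fin (m+1)), |z i| ≤ ‖(L.symm z : EuclideanSpace ℝ (Fin (m+1)))‖ :=
    fun z i => euclid_abs_coord_le (L.symm z) i
  have hface : ∀ (i : Fin (m+1)) (c : ℝ), |c| = |R| + 1 →
      ∀ x : Fin m → ℝ, f i (i.insertNth c x : Fin (m+1) → ℝ) = 0 := by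
    intro i c hc x
    have h1 : |(i.insertNth c x : Fin (m+1) → ℝ) i| = |R| + 1 := by
      rw [Fin.insertNth_apply_same]; exact hc
    have h2 : R < ‖(L.symm (i.insertNth c x : Fin (m+1) → ℝ) : EuclideanSpace ℝ (Fin (m+1)))‖ := by
      have := hnorm_ge (i.insertNth c x : Fin (m+1) → ℝ) i
      rw [h1] at this
      calc R ≤ |R| := le_abs_self R
        _ < |R| + 1 := by linarith
        _ ≤ _ := this
    show G (L.symm (i.insertNth c x : Fin (m+1) → ℝ)) i = 0
    rw [hG0 _ h2]
    rfl
  have hzero : ∀ i : Fin (m+1),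
      ((∫ (x : Fin m → ℝ) in Icc (a ∘ i.succAbove) (b ∘ i.succAbove), f i (i.insertNth (b i) x)) -
       ∫ (x : Fin m → ℝ) in Icc (a ∘ i.succAbove) (b ∘ i.succAbove), f i (i.insertNth (a i) x)) = 0 := by
    intro i
    rw [setIntegral_congr_fun measurableSet_Icc (g := fun _ => (0:ℝ))
        (fun x _ => hface i (b i) (by show |(|R|+1)| = |R|+1; rw [abs_of_pos]; positivity) x),
      setIntegral_congr_fun measurableSet_Icc (g := fun _ => (0:ℝ))
        (fun x _ => hface i (a i) (by show |(-(|R|+1))| = |R|+1; rw [abs_neg, abs_of_pos]; positivity) x)]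
    simp
  have hout : ∀ y : Fin (m+1) → ℝ, y ∉ Icc a b → (∑ i, f' i y (Pi.single i 1)) = 0 := by
    intro y hy
    have hex : ∃ i, R < |y i| := by
      simp only [Set.mem_Icc, not_and_or, Pi.le_def, not_forall, not_le] at hy
      rcases hy with ⟨i, hi'⟩ | ⟨i, hi'⟩
      · refine ⟨i, ?_⟩
        have h1 := le_abs_self R
        have h2 := neg_le_abs (y i)
        have h3 : y i < -(|R| + 1) := hi'
        linarith
      · refine ⟨i, ?_⟩
        have h1 := le_abs_self R
        have h2 := le_abs_self (y i)
        have h3 : (|R| + 1 : ℝ) < y i := hi'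
        linarith
    obtain ⟨i, hi'⟩ := hex
    have hR : R < ‖(L.symm y : EuclideanSpace ℝ (Fin (m+1)))‖ :=
      lt_of_lt_of_le hi' (hnorm_ge y i)
    have hz := hG'0 _ hR
    apply Finset.sum_eq_zero
    intro j _
    show (P j) ((G' (L.symm y)) (L.symm.toContinuousLinearMap (Pi.single j 1))) = 0
    rw [show G' (L.symm y) = 0 from hz]
    simp
  calc ∫ x, ∑ i, G' x (EuclideanSpace.single i 1) i
      = ∫ y : Fin (m+1) → ℝ, ∑ i, f' i y (Pi.single i 1) := by
        rw [← MeasurePreserving.integral_comp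
          (MeasurePreserving.symm _ (EuclideanSpace.volume_preserving_symm_measurableEquiv_toLp (Fin (m+1))))
          ((MeasurableEquiv.toLp 2 (Fin (m+1) → ℝ)).symm).symm.measurableEmbedding
          (fun x => ∑ i, G' x (EuclideanSpace.single i 1) i)]
        rfl
    _ = ∫ y in Icc a b, ∑ i, f' i y (Pi.single i 1) :=
        (setIntegral_eq_integral_of_forall_compl_eq_zero hout).symm
    _ = _ := key
    _ = 0 := by rw [Finset.sum_congr rfl (fun i _ => hzero i)]; simp


/-- smooth one-sided truncation -/
def psiAux (ε t : ℝ) : ℝ := (t - 2*ε) * Real.smoothTransition ((t - ε)/ε)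

/-- its derivative -/
def psiAux' (ε t : ℝ) : ℝ :=
  Real.smoothTransition ((t - ε)/ε)
    + (t - 2*ε) * (deriv Real.smoothTransition ((t - ε)/ε)) * ε⁻¹

lemma smoothTransition_deriv_zero_of_neg {s : ℝ} (hs : s < 0) :
    deriv Real.smoothTransition s = 0 := by
  have h : Real.smoothTransition =ᶠ[𝓝 s] (fun _ => (0:ℝ)) :=
    eventually_of_mem (Iio_mem_nhds hs) fun y hy => Real.smoothTransition.zero_of_nonpos (le_of_lt hy)
  rw [h.deriv_eq]; exact deriv_const _ _

lemma smoothTransition_deriv_zero_of_gt {s : ℝ} (hs : 1 < s) :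
    deriv Real.smoothTransition s = 0 := by
  have h : Real.smoothTransition =ᶠ[𝓝 s] (fun _ => (1:ℝ)) :=
    eventually_of_mem (Ioi_mem_nhds hs) fun y hy => Real.smoothTransition.one_of_one_le (le_of_lt hy)
  rw [h.deriv_eq]; exact deriv_const _ _

lemma psiAux_hasDerivAt {ε : ℝ} (hε : 0 < ε) (t : ℝ) :
    HasDerivAt (psiAux ε) (psiAux' ε t) t := by
  have hst : HasDerivAt Real.smoothTransition (deriv Real.smoothTransition ((t - ε)/ε)) ((t - ε)/ε) :=
    ((Real.smoothTransition.contDiff (n := 1)).differentiable (by simp) _).hasDerivAt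
  have hinner : HasDerivAt (fun t : ℝ => (t - ε)/ε) ε⁻¹ t := by
    simpa using ((hasDerivAt_id t).sub_const ε).div_const ε
  have hcomp : HasDerivAt (fun t : ℝ => Real.smoothTransition ((t - ε)/ε))
      (deriv Real.smoothTransition ((t - ε)/ε) * ε⁻¹) t := by have := hst.comp t hinner; exact this
  have hlin : HasDerivAt (fun t : ℝ => t - 2*ε) 1 t := (hasDerivAt_id t).sub_const _
  have := hlin.mul hcomp
  rw [show psiAux ε = ((fun t : ℝ => t - 2*ε) * fun t => Real.smoothTransition ((t - ε)/ε)) from rfl]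
  simpa [psiAux, psiAux', mul_assoc, one_mul] using this

lemma psiAux_zero_of_le {ε t : ℝ} (hε : 0 < ε) (ht : t ≤ ε) : psiAux ε t = 0 := by
  unfold psiAux
  rw [Real.smoothTransition.zero_of_nonpos (div_nonpos_iff.2 (Or.inr ⟨by linarith, hε.le⟩)), mul_zero]

lemma psiAux'_zero_of_lt {ε t : ℝ} (hε : 0 < ε) (ht : t < ε) : psiAux' ε t = 0 := by
  unfold psiAux'
  have harg : (t - ε)/ε < 0 := div_neg_of_neg_of_pos (by linarith) hε
  rw [Real.smoothTransition.zero_of_nonpos harg.le, smoothTransition_deriv_zero_of_neg harg]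
  ring

lemma psiAux'_one_of_gt {ε t : ℝ} (hε : 0 < ε) (ht : 2*ε < t) : psiAux' ε t = 1 := by
  unfold psiAux'
  have harg : 1 < (t - ε)/ε := (lt_div_iff₀ hε).2 (by linarith)
  rw [Real.smoothTransition.one_of_one_le harg.le, smoothTransition_deriv_zero_of_gt harg]
  ring

lemma psiAux'_bound : ∃ C : ℝ, 0 ≤ C ∧ ∀ ε t : ℝ, 0 < ε → |psiAux' ε t| ≤ C := by
  obtain ⟨B, hB⟩ := isCompact_Icc.exists_bound_of_continuousOn
    (((Real.smoothTransition.contDiff (n := 1)).continuous_deriv le_rfl).continuousOn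
      (s := Icc (0:ℝ) 1))
  refine ⟨1 + max B 0, by positivity, ?_⟩
  intro ε t hε
  by_cases harg : (t - ε)/ε ∈ Icc (0:ℝ) 1
  · have ht1 : ε ≤ t := by
      have := harg.1
      rw [le_div_iff₀ hε] at this
      linarith
    have ht2 : t ≤ 2*ε := by
      have := harg.2
      rw [div_le_one hε] at this
      linarith
    have hd : |deriv Real.smoothTransition ((t - ε)/ε)| ≤ max B 0 :=
      le_trans (le_of_eq (Real.norm_eq_abs _).symm) ((hB _ harg).trans (le_max_left _ _))
    calc |psiAux' ε t| ≤ |Real.smoothTransition ((t - ε)/ε)|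
          + |(t - 2*ε) * deriv Real.smoothTransition ((t - ε)/ε) * ε⁻¹| := abs_add_le _ _
      _ ≤ 1 + max B 0 := by
          gcongr
          · rw [abs_of_nonneg (Real.smoothTransition.nonneg _)]
            exact Real.smoothTransition.le_one _
          · rw [abs_mul, abs_mul]
            have h1 : |t - 2*ε| ≤ ε := by rw [abs_le]; constructor <;> linarith
            have h2 : |ε⁻¹| = ε⁻¹ := abs_of_pos (by positivity)
            calc |t - 2*ε| * |deriv Real.smoothTransition ((t - ε)/ε)| * |ε⁻¹|
                ≤ ε * max B 0 * ε⁻¹ := by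
                  rw [h2]
                  exact mul_le_mul (mul_le_mul h1 hd (abs_nonneg _) hε.le) le_rfl
                    (by positivity) (by positivity)
              _ = max B 0 := by field_simp
  · have hd : deriv Real.smoothTransition ((t - ε)/ε) = 0 := by
      rw [Set.mem_Icc] at harg
      rcases not_and_or.1 harg with h | h
      · exact smoothTransition_deriv_zero_of_neg (lt_of_not_ge h)
      · exact smoothTransition_deriv_zero_of_gt (lt_of_not_ge h)
    unfold psiAux'
    rw [hd]
    simp only [mul_zero, zero_mul, add_zero]
    rw [abs_of_nonneg (Real.smoothTransition.nonneg _)]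
    have := Real.smoothTransition.le_one ((t - ε)/ε)
    have : (0:ℝ) ≤ max B 0 := le_max_right _ _
    linarith [Real.smoothTransition.le_one ((t - ε)/ε)]

lemma psiAux'_tendsto (t : ℝ) :
    Tendsto (fun k : ℕ => psiAux' ((k+1:ℝ)⁻¹) t) atTop
      (𝓝 (if 0 < t then 1 else 0)) := by
  have hεpos : ∀ k : ℕ, (0:ℝ) < (k+1:ℝ)⁻¹ := fun k => by positivity
  by_cases ht : 0 < t
  · rw [if_pos ht]
    refine tendsto_const_nhds.congr' ?_
    have : ∀ᶠ k : ℕ in atTop, (k+1:ℝ)⁻¹ < t/2 := by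
      have h2 : Tendsto (fun k : ℕ => ((k:ℝ)+1)⁻¹) atTop (𝓝 0) :=
        tendsto_one_div_add_atTop_nhds_zero_nat.congr fun k => by rw [one_div]
      exact h2.eventually (eventually_lt_nhds (by positivity : (0:ℝ) < t/2))
    filter_upwards [this] with k hk
    exact (psiAux'_one_of_gt (hεpos k) (by linarith)).symm
  · rw [if_neg ht]
    push_neg at ht
    refine tendsto_const_nhds.congr' ?_
    filter_upwards with k
    exact (psiAux'_zero_of_lt (hεpos k) (lt_of_le_of_lt ht (hεpos k))).symm

lemma psiAux'_continuous {ε : ℝ} (hε : 0 < ε) : Continuous (psiAux' ε) := by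
  unfold psiAux'
  have h1 : Continuous (fun t : ℝ => (t - ε)/ε) := by continuity
  exact (Real.smoothTransition.continuous.comp h1).add
    ((((continuous_id.sub continuous_const).mul
      (((Real.smoothTransition.contDiff (n := 1)).continuous_deriv le_rfl).comp h1))).mul
      continuous_const)


lemma aux_norm_F {n : ℕ} (p : ℝ) (hp : 2 ≤ p) (z : EuclideanSpace ℝ (Fin n)) :
    ‖(‖z‖ ^ (p-2) • z : EuclideanSpace ℝ (Fin n))‖ = ‖z‖ ^ (p-1) := by
  by_cases hz : z = 0
  · rw [hz, smul_zero, norm_zero, Real.zero_rpow (by linarith : p - 1 ≠ 0)]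
  · have h0 : (0:ℝ) < ‖z‖ := norm_pos_iff.2 hz
    rw [norm_smul, Real.norm_eq_abs, abs_of_nonneg (Real.rpow_nonneg (norm_nonneg z) _)]
    calc ‖z‖ ^ (p-2) * ‖z‖ = ‖z‖ ^ (p-2) * ‖z‖ ^ (1:ℝ) := by rw [Real.rpow_one]
      _ = ‖z‖ ^ (p-1) := by rw [← Real.rpow_add h0]; ring_nf

lemma aux_gradient_contDiffAt {n : ℕ} {Ω : Set (EuclideanSpace ℝ (Fin n))} (hΩo : IsOpen Ω)
    {ustar : EuclideanSpace ℝ (Fin n) → ℝ} (hustar : ContDiffOn ℝ 2 ustar (closure Ω))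
    {x : EuclideanSpace ℝ (Fin n)} (hx : x ∈ Ω) :
    ContDiffAt ℝ 1 (gradient ustar) x := by
  have hcl : closure Ω ∈ 𝓝 x := mem_nhds_iff.2 ⟨Ω, subset_closure, hΩo, hx⟩
  have h2 : ContDiffAt ℝ 2 ustar x := hustar.contDiffAt hcl
  have hfd : ContDiffAt ℝ 1 (fderiv ℝ ustar) x := h2.fderiv_right (by norm_num)
  have hiso :
      ContDiff ℝ 1 fun ℓ : (EuclideanSpace ℝ (Fin n)) →L[ℝ] ℝ =>
        (InnerProductSpace.toDual ℝ (EuclideanSpace ℝ (Fin n))).symm ℓ :=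
    (InnerProductSpace.toDual ℝ (EuclideanSpace ℝ (Fin n))).symm.toContinuousLinearEquiv.toContinuousLinearMap.contDiff
  exact hiso.contDiffAt.comp x hfd

lemma aux_F_differentiable {n : ℕ} {Ω : Set (EuclideanSpace ℝ (Fin n))} (hΩo : IsOpen Ω)
    {p : ℝ} (hp : 2 ≤ p) {ustar : EuclideanSpace ℝ (Fin n) → ℝ}
    (hustar : ContDiffOn ℝ 2 ustar (closure Ω)) {x : EuclideanSpace ℝ (Fin n)} (hx : x ∈ Ω) :
    DifferentiableAt ℝ (fun y => ‖gradient ustar y‖ ^ (p-2) • gradient ustar y) x := by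
  have hg1 : ContDiffAt ℝ 1 (gradient ustar) x := aux_gradient_contDiffAt hΩo hustar hx
  have hgd : DifferentiableAt ℝ (gradient ustar) x := hg1.differentiableAt (by simp)
  by_cases hgz : gradient ustar x = 0
  · rcases eq_or_lt_of_le hp with hp2 | hp2
    · have hEq : (fun y => ‖gradient ustar y‖ ^ (p-2) • gradient ustar y)
          = fun y => gradient ustar y := by
        funext y
        rw [show p - 2 = 0 by linarith, Real.rpow_zero, one_smul]
      rw [hEq]; exact hgd
    · -- p > 2 and gradient vanishes at x : derivative is 0
      obtain ⟨K, t, ht, hlip⟩ := hg1.exists_lipschitzOnWith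
      have hxt : x ∈ t := mem_of_mem_nhds ht
      refine (HasFDerivAt.differentiableAt (f' := 0) ?_)
      rw [hasFDerivAt_iff_isLittleO_nhds_zero]
      rw [Asymptotics.isLittleO_iff]
      intro c hc
      -- ‖F (x+h)‖ ≤ K^(p-1) ‖h‖^(p-2) * ‖h‖
      have htend : Tendsto (fun h : EuclideanSpace ℝ (Fin n) => (K:ℝ)^(p-1) * ‖h‖^(p-2))
          (𝓝 0) (𝓝 0) := by
        have h1 : Tendsto (fun h : EuclideanSpace ℝ (Fin n) => ‖h‖) (𝓝 0) (𝓝 0) := by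
          simpa using tendsto_norm_zero
        have h2 : ContinuousAt (fun s : ℝ => s ^ (p-2)) 0 :=
          Real.continuousAt_rpow_const 0 (p-2) (Or.inr (by linarith))
        have h3 := (h2.tendsto.comp h1)
        rw [Real.zero_rpow (by linarith : p - 2 ≠ 0)] at h3
        simpa using h3.const_mul ((K:ℝ)^(p-1))
      have hev1 : ∀ᶠ h : EuclideanSpace ℝ (Fin n) in 𝓝 0, (K:ℝ)^(p-1) * ‖h‖^(p-2) < c :=
        htend (Iio_mem_nhds hc)
      have hev2 : ∀ᶠ h : EuclideanSpace ℝ (Fin n) in 𝓝 0, x + h ∈ t := by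
        have : Tendsto (fun h : EuclideanSpace ℝ (Fin n) => x + h) (𝓝 0) (𝓝 x) := by
          have hcont : Continuous (fun h : EuclideanSpace ℝ (Fin n) => x + h) :=
            continuous_const.add continuous_id
          simpa using hcont.tendsto 0
        exact this ht
      filter_upwards [hev1, hev2] with h hc1 hht
      simp only [ContinuousLinearMap.zero_apply, sub_zero]
      rw [hgz, smul_zero, sub_zero]
      have hgb : ‖gradient ustar (x + h)‖ ≤ (K:ℝ) * ‖h‖ := by
        have := hlip.dist_le_mul (x + h) hht x hxt
        rw [dist_eq_norm, dist_eq_norm, hgz, sub_zero, add_sub_cancel_left] at this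
        exact this
      calc ‖(‖gradient ustar (x+h)‖ ^ (p-2) • gradient ustar (x+h) : EuclideanSpace ℝ (Fin n))‖
          = ‖gradient ustar (x+h)‖ ^ (p-1) := aux_norm_F p hp _
        _ ≤ ((K:ℝ) * ‖h‖) ^ (p-1) :=
            Real.rpow_le_rpow (norm_nonneg _) hgb (by linarith)
        _ = (K:ℝ)^(p-1) * ‖h‖^(p-1) :=
            Real.mul_rpow (K.2) (norm_nonneg h)
        _ = (K:ℝ)^(p-1) * (‖h‖^(p-2) * ‖h‖) := by
            by_cases hh0 : h = 0
            · subst hh0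
              rw [norm_zero, Real.zero_rpow (by linarith : p - 1 ≠ 0)]
              simp
            · congr 1
              have hpos : (0:ℝ) < ‖h‖ := norm_pos_iff.2 hh0
              rw [show ‖h‖^(p-2) * ‖h‖ = ‖h‖^(p-2) * ‖h‖^(1:ℝ) by rw [Real.rpow_one],
                ← Real.rpow_add hpos]
              ring_nf
        _ ≤ c * ‖h‖ := by
            calc (K:ℝ)^(p-1) * (‖h‖^(p-2) * ‖h‖)
                = ((K:ℝ)^(p-1) * ‖h‖^(p-2)) * ‖h‖ := by ring
              _ ≤ c * ‖h‖ := mul_le_mul_of_nonneg_right hc1.le (norm_nonneg h)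
  · -- gradient nonzero
    have h1 : DifferentiableAt ℝ (fun y => ‖gradient ustar y‖) x :=
      hgd.norm ℝ hgz
    have h2 : DifferentiableAt ℝ (fun y => ‖gradient ustar y‖ ^ (p-2)) x :=
      h1.rpow_const (Or.inl (norm_ne_zero_iff.2 hgz))
    exact h2.smul hgd

lemma aux_gradient_continuousOn {n : ℕ} {Ω : Set (EuclideanSpace ℝ (Fin n))} (hΩo : IsOpen Ω)
    {f : EuclideanSpace ℝ (Fin n) → ℝ} (hf : ContDiffOn ℝ 1 f (closure Ω)) :
    ContinuousOn (gradient f) Ω := by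
  have h := (hf.mono subset_closure).continuousOn_fderivWithin hΩo.uniqueDiffOn le_rfl
  have h2 : ContinuousOn (fderiv ℝ f) Ω :=
    h.congr fun x hx => (fderivWithin_of_isOpen hΩo hx).symm
  exact ((InnerProductSpace.toDual ℝ (EuclideanSpace ℝ (Fin n))).symm.continuous.comp_continuousOn h2)

lemma aux_F_continuousOn {n : ℕ} {Ω : Set (EuclideanSpace ℝ (Fin n))} (hΩo : IsOpen Ω)
    {p : ℝ} (hp : 2 ≤ p) {ustar : EuclideanSpace ℝ (Fin n) → ℝ}
    (hustar : ContDiffOn ℝ 2 ustar (closure Ω)) :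
    ContinuousOn (fun y => ‖gradient ustar y‖ ^ (p-2) • gradient ustar y) Ω := by
  have hg : ContinuousOn (gradient ustar) Ω :=
    aux_gradient_continuousOn hΩo (hustar.of_le one_le_two)
  exact (hg.norm.rpow_const fun x _ => Or.inr (by linarith)).smul hg


lemma aux_integrableOn_of_bounded {n : ℕ} {Ω : Set (EuclideanSpace ℝ (Fin n))}
    (hΩm : MeasurableSet Ω) (hvol : volume Ω ≠ ⊤) {f : EuclideanSpace ℝ (Fin n) → ℝ}
    (hmeas : AEStronglyMeasurable f (volume.restrict Ω)) {M : ℝ}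
    (hb : ∀ x ∈ Ω, ‖f x‖ ≤ M) : IntegrableOn f Ω := by
  haveI : IsFiniteMeasure (volume.restrict Ω) :=
    ⟨by rwa [Measure.restrict_apply_univ, lt_top_iff_ne_top]⟩
  refine ⟨hmeas, ?_⟩
  apply MeasureTheory.HasFiniteIntegral.of_bounded (C := M)
  filter_upwards [ae_restrict_mem hΩm] with x hx
  exact hb x hx

lemma aux_orth {m : ℕ} {p : ℝ} (hp : 2 ≤ p) {Ω : Set (EuclideanSpace ℝ (Fin (m+1)))}
    (hΩo : IsOpen Ω) (hΩb : Bornology.IsBounded Ω)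
    {ustar w : EuclideanSpace ℝ (Fin (m+1)) → ℝ}
    (hustar : ContDiffOn ℝ 2 ustar (closure Ω))
    (hpharm : ∀ x ∈ Ω, pLap p ustar x = 0)
    (hw : ContDiffOn ℝ 1 w (closure Ω))
    (hwb : ∀ x ∈ frontier Ω, w x = 0) :
    ∫ x in Ω, (if 0 < w x then
      fderiv ℝ w x (‖gradient ustar x‖ ^ (p-2) • gradient ustar x) else 0) = 0 := by
  classical
  set F : EuclideanSpace ℝ (Fin (m+1)) → EuclideanSpace ℝ (Fin (m+1)) :=
    fun y => ‖gradient ustar y‖ ^ (p-2) • gradient ustar y with hFdef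
  obtain ⟨Mw, hMw0, hMw⟩ := aux_exists_fderiv_bound hΩo hΩb hw
  obtain ⟨Mu, hMu0, hMu⟩ := aux_exists_fderiv_bound hΩo hΩb (hustar.of_le one_le_two)
  have hFbound : ∀ x ∈ Ω, ‖F x‖ ≤ Mu^(p-1) := by
    intro x hx
    rw [hFdef, aux_norm_F p hp]
    exact Real.rpow_le_rpow (norm_nonneg _) (norm_gradient_eq ▸ hMu x hx) (by linarith)
  have hDwF_bound : ∀ x ∈ Ω, |fderiv ℝ w x (F x)| ≤ Mw * Mu^(p-1) := by
    intro x hx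
    rw [← Real.norm_eq_abs]
    calc ‖fderiv ℝ w x (F x)‖ ≤ ‖fderiv ℝ w x‖ * ‖F x‖ := (fderiv ℝ w x).le_opNorm _
      _ ≤ Mw * Mu^(p-1) := mul_le_mul (hMw x hx) (hFbound x hx) (norm_nonneg _) hMw0
  have hwdiff : ∀ x ∈ Ω, DifferentiableAt ℝ w x := fun x hx => aux_differentiableAt hΩo hw hx
  have hFdiff : ∀ x ∈ Ω, DifferentiableAt ℝ F x :=
    fun x hx => aux_F_differentiable hΩo hp hustar hx
  have hh_cont : ContinuousOn (fun x => fderiv ℝ w x (F x)) Ω :=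
    (aux_continuousOn_fderiv hΩo hw).clm_apply (aux_F_continuousOn hΩo hp hustar)
  have hΩm : MeasurableSet Ω := hΩo.measurableSet
  have hΩvol : volume Ω ≠ ⊤ := hΩb.measure_lt_top.ne
  obtain ⟨R, hR⟩ := hΩb.subset_ball 0
  have hRout : ∀ x : EuclideanSpace ℝ (Fin (m+1)), R < ‖x‖ → x ∉ Ω := by
    intro x h hx
    have := hR hx
    rw [mem_ball, dist_zero_right] at this
    linarith
  have hwcont : ContinuousOn w (closure Ω) := hw.continuousOn
  -- the divergence identity for every ε > 0
  have hIden : ∀ ε : ℝ, 0 < ε →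
      ∫ x in Ω, psiAux' ε (w x) * fderiv ℝ w x (F x) = 0 := by
    intro ε hε
    set G : EuclideanSpace ℝ (Fin (m+1)) → EuclideanSpace ℝ (Fin (m+1)) :=
      Ω.indicator (fun x => psiAux ε (w x) • F x) with hGdef
    set G' : EuclideanSpace ℝ (Fin (m+1)) → (EuclideanSpace ℝ (Fin (m+1)) →L[ℝ] EuclideanSpace ℝ (Fin (m+1))) :=
      fun x => if x ∈ Ω then
        (psiAux ε (w x) • fderiv ℝ F x
          + (psiAux' ε (w x) • fderiv ℝ w x).smulRight (F x)) else 0 with hG'def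
    have hGd : ∀ x, HasFDerivAt G (G' x) x := by
      intro x
      by_cases hx : x ∈ Ω
      · have hloc : G =ᶠ[𝓝 x] (fun y => psiAux ε (w y) • F y) :=
          eventually_of_mem (hΩo.mem_nhds hx) fun y hy => indicator_of_mem hy _
        have hprod : HasFDerivAt (fun y => psiAux ε (w y) • F y)
            (psiAux ε (w x) • fderiv ℝ F x
              + (psiAux' ε (w x) • fderiv ℝ w x).smulRight (F x)) x := by
          have hψ : HasFDerivAt (fun y => psiAux ε (w y))
              (psiAux' ε (w x) • fderiv ℝ w x) x :=
            (psiAux_hasDerivAt hε (w x)).comp_hasFDerivAt x (hwdiff x hx).hasFDerivAt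
          exact hψ.smul (hFdiff x hx).hasFDerivAt
        have hG'x : G' x = psiAux ε (w x) • fderiv ℝ F x
            + (psiAux' ε (w x) • fderiv ℝ w x).smulRight (F x) := by
          simp only [hG'def]; rw [if_pos hx]
        rw [hG'x]
        exact hprod.congr_of_eventuallyEq hloc
      · have hG'x : G' x = 0 := by simp only [hG'def]; rw [if_neg hx]
        have hloc : G =ᶠ[𝓝 x] fun _ => 0 := by
          by_cases hxc : x ∈ closure Ω
          · -- frontier point
            have hxf : x ∈ frontier Ω := by
              rw [frontier, hΩo.interior_eq]; exact ⟨hxc, hx⟩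
            have hwx0 : w x = 0 := hwb x hxf
            have hc : ContinuousWithinAt w (closure Ω) x := hwcont x hxc
            have hev : {y | w y < ε} ∈ 𝓝[closure Ω] x := by
              have hIio : Iio ε ∈ 𝓝 (w x) := by rw [hwx0]; exact Iio_mem_nhds hε
              have h2 := hc hIio
              rw [mem_map] at h2
              exact h2
            obtain ⟨O, hOopen, hxO, hOsub⟩ := mem_nhdsWithin.1 hev
            refine eventually_of_mem (hOopen.mem_nhds hxO) fun y hy => ?_
            by_cases hyΩ : y ∈ Ω
            · rw [hGdef, indicator_of_mem hyΩ,
                psiAux_zero_of_le hε (le_of_lt (hOsub ⟨hy, subset_closure hyΩ⟩)), zero_smul]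
            · exact indicator_of_notMem hyΩ _
          · refine eventually_of_mem (IsOpen.mem_nhds isClosed_closure.isOpen_compl hxc)
              fun y hy => ?_
            exact indicator_of_notMem (fun hyΩ => hy (subset_closure hyΩ)) _
        rw [hG'x]
        exact (hasFDerivAt_const (0 : EuclideanSpace ℝ (Fin (m+1))) x).congr_of_eventuallyEq hloc
    have hG0 : ∀ x, R < ‖x‖ → G x = 0 := fun x h => indicator_of_notMem (hRout x h) _
    have hG'0 : ∀ x, R < ‖x‖ → G' x = 0 := fun x h => by
      simp only [hG'def]; rw [if_neg (hRout x h)]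
    have hdiv : ∀ x, (∑ i, G' x (EuclideanSpace.single i 1) i) =
        Ω.indicator (fun y => psiAux' ε (w y) * fderiv ℝ w y (F y)) x := by
      intro x
      by_cases hx : x ∈ Ω
      · rw [indicator_of_mem hx]
        simp only [hG'def, if_pos hx]
        have hvdivF : vdiv F x = 0 := hpharm x hx
        have hexpand : ∀ i : Fin (m+1),
            ((psiAux ε (w x) • fderiv ℝ F x
              + (psiAux' ε (w x) • fderiv ℝ w x).smulRight (F x)) (EuclideanSpace.single i 1)) i
            = psiAux ε (w x) * (fderiv ℝ F x (EuclideanSpace.single i 1) i)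
              + (psiAux' ε (w x) * fderiv ℝ w x (EuclideanSpace.single i 1)) * (F x i) := by
          intro i
          rfl
        rw [Finset.sum_congr rfl fun i _ => hexpand i, Finset.sum_add_distrib]
        rw [← Finset.mul_sum]
        rw [show (∑ i, fderiv ℝ F x (EuclideanSpace.single i 1) i) = vdiv F x from rfl, hvdivF,
          mul_zero, zero_add]
        have := euclid_sum_apply (fderiv ℝ w x) (F x)
        calc ∑ i, (psiAux' ε (w x) * fderiv ℝ w x (EuclideanSpace.single i 1)) * (F x i)
            = psiAux' ε (w x) * ∑ i, fderiv ℝ w x (EuclideanSpace.single i 1) * (F x i) := by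
              rw [Finset.mul_sum]; congr 1; funext i; ring
          _ = psiAux' ε (w x) * fderiv ℝ w x (F x) := by rw [this]
      · rw [indicator_of_notMem hx]
        simp only [hG'def, if_neg hx]
        simp
    have hint : Integrable (fun x => ∑ i, G' x (EuclideanSpace.single i 1) i) := by
      rw [show (fun x => ∑ i, G' x (EuclideanSpace.single i 1) i)
          = Ω.indicator (fun y => psiAux' ε (w y) * fderiv ℝ w y (F y)) from funext hdiv]
      apply IntegrableOn.integrable_indicator _ hΩm
      obtain ⟨C, hC0, hCb⟩ := psiAux'_bound
      apply aux_integrableOn_of_bounded (M := C * (Mw * Mu^(p-1))) hΩm hΩvol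
      · exact (((psiAux'_continuous hε).comp_continuousOn
          (hwcont.mono subset_closure)).mul hh_cont).aestronglyMeasurable hΩm
      · intro x hx
        rw [Real.norm_eq_abs, abs_mul]
        exact mul_le_mul (hCb ε (w x) hε) (hDwF_bound x hx) (abs_nonneg _) hC0
    have h0 := aux_div_integral_zero G G' R hGd hG0 hG'0 hint
    rw [funext hdiv, integral_indicator hΩm] at h0
    exact h0
  -- pass to the limit
  obtain ⟨C, hC0, hCb⟩ := psiAux'_bound
  have hdct := tendsto_integral_of_dominated_convergence
    (μ := volume.restrict Ω)
    (F := fun k x => psiAux' ((k+1:ℝ)⁻¹) (w x) * fderiv ℝ w x (F x))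
    (f := fun x => if 0 < w x then fderiv ℝ w x (F x) else 0)
    (bound := fun _ => C * (Mw * Mu^(p-1)))
    (fun k => (((psiAux'_continuous (by positivity)).comp_continuousOn
      (hwcont.mono subset_closure)).mul hh_cont).aestronglyMeasurable hΩm)
    (integrableOn_const hΩb.measure_lt_top.ne)
    (fun k => by
      filter_upwards [ae_restrict_mem hΩm] with x hx
      rw [Real.norm_eq_abs, abs_mul]
      exact mul_le_mul (hCb _ (w x) (by positivity)) (hDwF_bound x hx) (abs_nonneg _) hC0)
    (by
      filter_upwards with x
      have h1 := (psiAux'_tendsto (w x)).mul_const (fderiv ℝ w x (F x))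
      by_cases hwx : 0 < w x
      · rw [if_pos hwx] at h1 ⊢
        simpa using h1
      · rw [if_neg hwx] at h1 ⊢
        simpa using h1)
  have hzero : ∀ k : ℕ, ∫ x in Ω, psiAux' ((k+1:ℝ)⁻¹) (w x) * fderiv ℝ w x (F x) = 0 :=
    fun k => hIden _ (by positivity)
  have hconst : Tendsto (fun _ : ℕ => (0:ℝ)) atTop
      (𝓝 (∫ x in Ω, (if 0 < w x then fderiv ℝ w x (F x) else 0))) := by
    refine hdct.congr fun k => hzero k
  exact (tendsto_nhds_unique hconst tendsto_const_nhds).symm ▸ rfl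



/-- Quantitative minimality: with the constant `c(p)` of inequality (A2),
`c(p) ∫ |∇v - ∇u*|^p ≤ ∫ (|∇v|^p - |∇u*|^p)` whenever `u*` is `p`-harmonic and
`v` has the same boundary values. -/
theorem pharmonic_quantitative_minimality {n : ℕ} (p c : ℝ) (hp : 2 ≤ p)
    (hc : c ∈ Set.Ioc (0 : ℝ) 1)
    (hA2 : ∀ a b : EuclideanSpace ℝ (Fin n),
      ‖a‖ ^ p + p * ⟪‖a‖ ^ (p - 2) • a, b - a⟫ + c * ‖b - a‖ ^ p ≤ ‖b‖ ^ p)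
    (Ω : Set (EuclideanSpace ℝ (Fin n))) (hΩo : IsOpen Ω) (hΩb : Bornology.IsBounded Ω)
    (ustar v : EuclideanSpace ℝ (Fin n) → ℝ)
    (hustar : ContDiffOn ℝ 2 ustar (closure Ω))
    (hpharm : ∀ x ∈ Ω, pLap p ustar x = 0)
    (hv : ContDiffOn ℝ 1 v (closure Ω))
    (hvb : ∀ x ∈ frontier Ω, v x = ustar x) :
    c * ∫ x in Ω, ‖gradient v x - gradient ustar x‖ ^ p
      ≤ ∫ x in Ω, (‖gradient v x‖ ^ p - ‖gradient ustar x‖ ^ p) := by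
  classical
  rcases n with _ | m
  · -- dimension zero : all gradients coincide
    haveI : Subsingleton (EuclideanSpace ℝ (Fin 0)) :=
      ⟨fun a b => by ext i; exact i.elim0⟩
    have h1 : ∀ x : EuclideanSpace ℝ (Fin 0),
        ‖gradient v x - gradient ustar x‖ ^ p = 0 := by
      intro x
      rw [Subsingleton.elim (gradient v x) (gradient ustar x), sub_self, norm_zero,
        Real.zero_rpow (by linarith : p ≠ 0)]
    have h2 : ∀ x : EuclideanSpace ℝ (Fin 0),
        ‖gradient v x‖ ^ p - ‖gradient ustar x‖ ^ p = 0 := by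
      intro x
      rw [Subsingleton.elim (gradient v x) (gradient ustar x), sub_self]
    simp only [h1, h2, integral_zero, mul_zero]
    exact le_refl 0
  · set w : EuclideanSpace ℝ (Fin (m+1)) → ℝ := fun x => v x - ustar x with hwdef
    have hw : ContDiffOn ℝ 1 w (closure Ω) := hv.sub (hustar.of_le one_le_two)
    have hwb : ∀ x ∈ frontier Ω, w x = 0 := fun x hx => sub_eq_zero.2 (hvb x hx)
    set F : EuclideanSpace ℝ (Fin (m+1)) → EuclideanSpace ℝ (Fin (m+1)) :=
      fun y => ‖gradient ustar y‖ ^ (p-2) • gradient ustar y with hFdef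
    set h : EuclideanSpace ℝ (Fin (m+1)) → ℝ := fun x => fderiv ℝ w x (F x) with hhdef
    have hΩm : MeasurableSet Ω := hΩo.measurableSet
    have hΩvol : volume Ω ≠ ⊤ := hΩb.measure_lt_top.ne
    have hudiff : ∀ x ∈ Ω, DifferentiableAt ℝ ustar x := fun x hx =>
      aux_differentiableAt hΩo (hustar.of_le one_le_two) hx
    have hvdiff : ∀ x ∈ Ω, DifferentiableAt ℝ v x := fun x hx => aux_differentiableAt hΩo hv hx
    have hwdiff : ∀ x ∈ Ω, DifferentiableAt ℝ w x := fun x hx => aux_differentiableAt hΩo hw hx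
    obtain ⟨Mw, hMw0, hMw⟩ := aux_exists_fderiv_bound hΩo hΩb hw
    obtain ⟨Mu, hMu0, hMu⟩ := aux_exists_fderiv_bound hΩo hΩb (hustar.of_le one_le_two)
    obtain ⟨Mv, hMv0, hMv⟩ := aux_exists_fderiv_bound hΩo hΩb hv
    have hgu_cont : ContinuousOn (gradient ustar) Ω :=
      aux_gradient_continuousOn hΩo (hustar.of_le one_le_two)
    have hgv_cont : ContinuousOn (gradient v) Ω := aux_gradient_continuousOn hΩo hv
    have hh_cont : ContinuousOn h Ω :=
      (aux_continuousOn_fderiv hΩo hw).clm_apply (aux_F_continuousOn hΩo hp hustar)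
    have hgu_b : ∀ x ∈ Ω, ‖gradient ustar x‖ ≤ Mu := fun x hx => norm_gradient_eq ▸ hMu x hx
    have hgv_b : ∀ x ∈ Ω, ‖gradient v x‖ ≤ Mv := fun x hx => norm_gradient_eq ▸ hMv x hx
    have hFb : ∀ x ∈ Ω, ‖F x‖ ≤ Mu ^ (p-1) := by
      intro x hx
      rw [hFdef]
      rw [aux_norm_F p hp]
      exact Real.rpow_le_rpow (norm_nonneg _) (hgu_b x hx) (by linarith)
    have hh_b : ∀ x ∈ Ω, ‖h x‖ ≤ Mw * Mu ^ (p-1) := by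
      intro x hx
      calc ‖h x‖ ≤ ‖fderiv ℝ w x‖ * ‖F x‖ := (fderiv ℝ w x).le_opNorm _
        _ ≤ Mw * Mu ^ (p-1) := mul_le_mul (hMw x hx) (hFb x hx) (norm_nonneg _) hMw0
    -- integrability of the various integrands
    have hInt1 : IntegrableOn (fun x => ‖gradient v x - gradient ustar x‖ ^ p) Ω := by
      refine aux_integrableOn_of_bounded hΩm hΩvol (M := (Mv + Mu) ^ p) ?_ ?_
      · exact (((hgv_cont.sub hgu_cont).norm).rpow_const
          (fun x _ => Or.inr (by linarith))).aestronglyMeasurable hΩm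
      · intro x hx
        rw [Real.norm_eq_abs, abs_of_nonneg (Real.rpow_nonneg (norm_nonneg _) _)]
        exact Real.rpow_le_rpow (norm_nonneg _)
          ((norm_sub_le _ _).trans (add_le_add (hgv_b x hx) (hgu_b x hx))) (by linarith)
    have hIntv : IntegrableOn (fun x => ‖gradient v x‖ ^ p) Ω := by
      refine aux_integrableOn_of_bounded hΩm hΩvol (M := Mv ^ p) ?_ ?_
      · exact (hgv_cont.norm.rpow_const (fun x _ => Or.inr (by linarith))).aestronglyMeasurable hΩm
      · intro x hx
        rw [Real.norm_eq_abs, abs_of_nonneg (Real.rpow_nonneg (norm_nonneg _) _)]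
        exact Real.rpow_le_rpow (norm_nonneg _) (hgv_b x hx) (by linarith)
    have hIntu : IntegrableOn (fun x => ‖gradient ustar x‖ ^ p) Ω := by
      refine aux_integrableOn_of_bounded hΩm hΩvol (M := Mu ^ p) ?_ ?_
      · exact (hgu_cont.norm.rpow_const (fun x _ => Or.inr (by linarith))).aestronglyMeasurable hΩm
      · intro x hx
        rw [Real.norm_eq_abs, abs_of_nonneg (Real.rpow_nonneg (norm_nonneg _) _)]
        exact Real.rpow_le_rpow (norm_nonneg _) (hgu_b x hx) (by linarith)
    have hInth : IntegrableOn h Ω :=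
      aux_integrableOn_of_bounded hΩm hΩvol (hh_cont.aestronglyMeasurable hΩm) hh_b
    -- orthogonality : ∫ h = 0
    have horth : ∫ x in Ω, h x = 0 := by
      have o1 : ∫ x in Ω, (if 0 < w x then h x else 0) = 0 :=
        aux_orth hp hΩo hΩb hustar hpharm hw hwb
      have o2raw := aux_orth hp hΩo hΩb hustar hpharm (w := fun x => -(w x)) hw.neg
        (fun x hx => by simp [hwb x hx])
      have o2 : ∫ x in Ω, (if w x < 0 then h x else 0) = 0 := by
        have h1 : ∫ x in Ω, (if w x < 0 then h x else 0)
            = -∫ x in Ω, (if 0 < -(w x) then fderiv ℝ (fun y => -(w y)) x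
                (‖gradient ustar x‖ ^ (p-2) • gradient ustar x) else 0) := by
          rw [← integral_neg]
          refine setIntegral_congr_fun hΩm fun x _ => ?_
          have hfneg : fderiv ℝ (fun y => -(w y)) x = -fderiv ℝ w x := fderiv_neg
          by_cases hx : w x < 0
          · rw [if_pos hx, if_pos (by linarith : (0:ℝ) < -(w x)), hfneg]
            rw [ContinuousLinearMap.neg_apply, neg_neg]
          · rw [if_neg hx, if_neg (by rw [neg_pos]; exact hx), neg_zero]
        rw [h1, o2raw, neg_zero]
      have o3 : ∫ x in Ω, (if w x = 0 then h x else 0) = 0 := by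
        have hae := aux_fderiv_ae_zero hΩo hwdiff (hw.continuousOn.mono subset_closure)
        apply integral_eq_zero_of_ae
        filter_upwards [hae] with x hx
        show (if w x = 0 then h x else 0) = 0
        by_cases hwx : w x = 0
        · rw [if_pos hwx]
          show fderiv ℝ w x (F x) = 0
          rw [hx hwx]
          simp
        · rw [if_neg hwx]
      -- integrability of the three pieces
      have hU1 : IsOpen (Ω ∩ w ⁻¹' (Ioi 0)) :=
        (hw.continuousOn.mono subset_closure).isOpen_inter_preimage hΩo isOpen_Ioi
      have hU2 : IsOpen (Ω ∩ w ⁻¹' (Iio 0)) :=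
        (hw.continuousOn.mono subset_closure).isOpen_inter_preimage hΩo isOpen_Iio
      have hp1int : IntegrableOn (fun x => if 0 < w x then h x else 0) Ω := by
        refine (hInth.indicator hU1.measurableSet).congr ?_
        filter_upwards [ae_restrict_mem hΩm] with x hx
        by_cases hwx : 0 < w x
        · rw [if_pos hwx,
            indicator_of_mem (show x ∈ Ω ∩ w ⁻¹' (Ioi 0) from ⟨hx, hwx⟩) h]
        · rw [if_neg hwx, indicator_of_notMem
            (show x ∉ Ω ∩ w ⁻¹' (Ioi 0) from fun hmem => hwx hmem.2) h]
      have hp2int : IntegrableOn (fun x => if w x < 0 then h x else 0) Ω := by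
        refine (hInth.indicator hU2.measurableSet).congr ?_
        filter_upwards [ae_restrict_mem hΩm] with x hx
        by_cases hwx : w x < 0
        · rw [if_pos hwx,
            indicator_of_mem (show x ∈ Ω ∩ w ⁻¹' (Iio 0) from ⟨hx, hwx⟩) h]
        · rw [if_neg hwx, indicator_of_notMem
            (show x ∉ Ω ∩ w ⁻¹' (Iio 0) from fun hmem => hwx hmem.2) h]
      have hp3int : IntegrableOn (fun x => if w x = 0 then h x else 0) Ω := by
        have hEq : (fun x => if w x = 0 then h x else 0)
            = fun x => h x - (if 0 < w x then h x else 0) - (if w x < 0 then h x else 0) := by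
          funext x
          rcases lt_trichotomy (w x) 0 with hx | hx | hx
          · rw [if_neg (ne_of_lt hx), if_neg (by rw [not_lt]; exact hx.le), if_pos hx]; ring
          · rw [if_pos hx, if_neg (by rw [hx]; exact lt_irrefl 0),
              if_neg (by rw [hx]; exact lt_irrefl 0)]; ring
          · rw [if_neg (ne_of_gt hx), if_pos hx, if_neg (by rw [not_lt]; exact hx.le)]; ring
        rw [hEq]
        exact (hInth.sub hp1int).sub hp2int
      have hsplit : (fun x => h x) = fun x => ((if 0 < w x then h x else 0)
          + (if w x < 0 then h x else 0)) + (if w x = 0 then h x else 0) := by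
        funext x
        rcases lt_trichotomy (w x) 0 with hx | hx | hx
        · rw [if_neg (by rw [not_lt]; exact hx.le), if_pos hx, if_neg (ne_of_lt hx)]; ring
        · rw [if_neg (by rw [hx]; exact lt_irrefl 0), if_neg (by rw [hx]; exact lt_irrefl 0),
            if_pos hx]; ring
        · rw [if_pos hx, if_neg (by rw [not_lt]; exact hx.le), if_neg (ne_of_gt hx)]; ring
      have hp12int : IntegrableOn (fun x => (if 0 < w x then h x else 0)
          + (if w x < 0 then h x else 0)) Ω := hp1int.add hp2int
      calc ∫ x in Ω, h x
          = ∫ x in Ω, (((if 0 < w x then h x else 0) + (if w x < 0 then h x else 0))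
            + (if w x = 0 then h x else 0)) := by rw [← hsplit]
        _ = (∫ x in Ω, ((if 0 < w x then h x else 0) + (if w x < 0 then h x else 0)))
            + ∫ x in Ω, (if w x = 0 then h x else 0) := integral_add hp12int hp3int
        _ = ((∫ x in Ω, (if 0 < w x then h x else 0))
            + ∫ x in Ω, (if w x < 0 then h x else 0))
            + ∫ x in Ω, (if w x = 0 then h x else 0) :=
            congrArg (fun t => t + ∫ x in Ω, (if w x = 0 then h x else 0))
              (integral_add hp1int hp2int)
        _ = 0 := by rw [o1, o2, o3]; ring
    -- pointwise inequality
    have hpoint : ∀ x ∈ Ω, c * ‖gradient v x - gradient ustar x‖ ^ p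
        ≤ (‖gradient v x‖ ^ p - ‖gradient ustar x‖ ^ p) - p * h x := by
      intro x hx
      have hA := hA2 (gradient ustar x) (gradient v x)
      have hginner : (⟪‖gradient ustar x‖ ^ (p - 2) • gradient ustar x,
          gradient v x - gradient ustar x⟫ : ℝ) = h x := by
        have hgsub : gradient v x - gradient ustar x = gradient w x :=
          (gradient_sub_eq (hvdiff x hx) (hudiff x hx)).symm
        rw [hgsub, real_inner_comm]
        exact gradient_inner_apply
      rw [hginner] at hA
      linarith
    have hg2int : IntegrableOn
        (fun x => ‖gradient v x‖ ^ p - ‖gradient ustar x‖ ^ p) Ω := hIntv.sub hIntu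
    have hphint : IntegrableOn (fun x => p * h x) Ω := hInth.const_mul p
    have hcint : IntegrableOn
        (fun x => c * ‖gradient v x - gradient ustar x‖ ^ p) Ω := hInt1.const_mul c
    have hrhsint : IntegrableOn (fun x => (‖gradient v x‖ ^ p - ‖gradient ustar x‖ ^ p)
        - p * h x) Ω := hg2int.sub hphint
    have hmono := setIntegral_mono_on hcint hrhsint hΩm hpoint
    calc c * ∫ x in Ω, ‖gradient v x - gradient ustar x‖ ^ p
        = ∫ x in Ω, c * ‖gradient v x - gradient ustar x‖ ^ p :=
          (integral_const_mul c _).symm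
      _ ≤ ∫ x in Ω, ((‖gradient v x‖ ^ p - ‖gradient ustar x‖ ^ p) - p * h x) := hmono
      _ = (∫ x in Ω, (‖gradient v x‖ ^ p - ‖gradient ustar x‖ ^ p))
          - ∫ x in Ω, p * h x := integral_sub hg2int hphint
      _ = (∫ x in Ω, (‖gradient v x‖ ^ p - ‖gradient ustar x‖ ^ p))
          - p * ∫ x in Ω, h x :=
          congrArg (fun t => (∫ x in Ω, (‖gradient v x‖ ^ p - ‖gradient ustar x‖ ^ p)) - t)
            (integral_const_mul p _)
      _ = ∫ x in Ω, (‖gradient v x‖ ^ p - ‖gradient ustar x‖ ^ p) := by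
          rw [horth, mul_zero, sub_zero]


end
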